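/- Let a > 0 and c(l,1) be defined by c(1,1) = c(1)·a/(3a+2) with c(1) = B(a,a+2)/B(a,a+1), and c(l,1) = c(l−1,1)·(l−2+a)/((a+1)(l+1+a/(a+1))) for l ≥ 2. Then c(l,1) = Θ(l^{−3+a²/(a+1)}/(1+a)^l) as l → ∞. -/

import Mathlib

set_option maxHeartbeats 1000000

open Real

noncomputable def betaF (x y : ℝ) : ℝ := Real.Gamma x * Real.Gamma y / Real.Gamma (x + y)

lemma log_one_add_bound {x : ℝ} (hx : |x| ≤ 1/2) :
    |Real.log (1 + x) - x| ≤ 2 * x ^ 2 := by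
  obtain ⟨hxl, hxr⟩ := abs_le.1 hx
  have h1 : (0:ℝ) < 1 + x := by linarith
  have hup : Real.log (1 + x) ≤ x := by
    have := Real.log_le_sub_one_of_pos h1
    linarith
  have hlow : x - 2 * x ^ 2 ≤ Real.log (1 + x) := by
    have h2 : Real.log (1 + x) = - Real.log (1/(1+x)) := by
      rw [Real.log_div one_ne_zero (ne_of_gt h1), Real.log_one]; ring
    have h3 : Real.log (1/(1+x)) ≤ 1/(1+x) - 1 :=
      Real.log_le_sub_one_of_pos (by positivity)
    have h4 : 1 - 1/(1+x) ≤ Real.log (1+x) := by rw [h2]; linarith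
    have h5 : x - 2*x^2 ≤ 1 - 1/(1+x) := by
      rw [show (1:ℝ) - 1/(1+x) = x/(1+x) by field_simp; ring, le_div_iff₀ h1]
      nlinarith [mul_nonneg (sq_nonneg x) (by linarith : (0:ℝ) ≤ 1 + 2*x)]
    linarith
  rw [abs_le]
  constructor <;> nlinarith [sq_nonneg x]

lemma sandwich (r : ℕ → ℝ) (C : ℝ) (L : ℕ) (hL : 1 ≤ L) (hrL : 0 < r L)
    (hstep : ∀ l : ℕ, L ≤ l → ∃ S : ℝ, r (l+1) = r l * Real.exp S ∧
      -(C / ((l:ℝ)*((l:ℝ)+1))) ≤ S ∧ S ≤ C / ((l:ℝ)*((l:ℝ)+1))) :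
    ∀ l : ℕ, L ≤ l →
      r L * Real.exp (-(C * (1/(L:ℝ) - 1/(l:ℝ)))) ≤ r l ∧
      r l ≤ r L * Real.exp (C * (1/(L:ℝ) - 1/(l:ℝ))) := by
  intro l hl
  induction l, hl using Nat.le_induction with
  | base =>
    simp
  | succ n hn ih =>
    obtain ⟨S, hrS, hS1, hS2⟩ := hstep n hn
    have hn0 : (0:ℝ) < (n:ℝ) := by
      have : (1:ℝ) ≤ (n:ℝ) := by exact_mod_cast le_trans hL hn
      linarith
    have hn1 : (0:ℝ) < (n:ℝ) + 1 := by linarith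
    have hid : ∀ s : ℝ, -(s * (1/(L:ℝ) - 1/(n:ℝ))) + -(s / ((n:ℝ)*((n:ℝ)+1)))
        = -(s * (1/(L:ℝ) - 1/((n:ℝ)+1))) := by
      intro s
      field_simp
      ring
    have hrn : 0 < r n := lt_of_lt_of_le (by positivity) ih.1
    push_cast
    constructor
    · calc r L * Real.exp (-(C * (1/(L:ℝ) - 1/((n:ℝ)+1))))
          = r L * Real.exp (-(C * (1/(L:ℝ) - 1/(n:ℝ)))) * Real.exp (-(C / ((n:ℝ)*((n:ℝ)+1)))) := by
            rw [mul_assoc, ← Real.exp_add, hid C]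
        _ ≤ r n * Real.exp S :=
            mul_le_mul ih.1 (Real.exp_le_exp.2 hS1) (Real.exp_pos _).le hrn.le
        _ = r (n+1) := hrS.symm
    · calc r (n+1) = r n * Real.exp S := hrS
        _ ≤ r L * Real.exp (C * (1/(L:ℝ) - 1/(n:ℝ))) * Real.exp (C / ((n:ℝ)*((n:ℝ)+1))) :=
            mul_le_mul ih.2 (Real.exp_le_exp.2 hS2) (Real.exp_pos _).le
              (by positivity)
        _ = r L * Real.exp (C * (1/(L:ℝ) - 1/((n:ℝ)+1))) := by
            rw [mul_assoc, ← Real.exp_add]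
            have h : C * (1/(L:ℝ) - 1/(n:ℝ)) + C / ((n:ℝ)*((n:ℝ)+1))
                = C * (1/(L:ℝ) - 1/((n:ℝ)+1)) := by
              field_simp
              ring
            rw [h]

theorem cl1_asymptotic (a : ℝ) (ha : 0 < a) (c : ℕ → ℝ)
    (h1 : c 1 = betaF a (a + 2) / betaF a (a + 1) * (a / (3 * a + 2)))
    (hrec : ∀ l : ℕ, 2 ≤ l →
      c l = c (l - 1) * (((l : ℝ) - 2 + a) /
        ((a + 1) * ((l : ℝ) + 1 + a / (a + 1))))) :
    ∃ c₁ > 0, ∃ c₂ > 0, ∃ L : ℕ, ∀ l : ℕ, L ≤ l →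
      c₁ * (l : ℝ) ^ (-3 + a ^ 2 / (a + 1)) / (1 + a) ^ (l : ℝ) ≤ c l ∧
      c l ≤ c₂ * (l : ℝ) ^ (-3 + a ^ 2 / (a + 1)) / (1 + a) ^ (l : ℝ) := by
  have ha1 : (0:ℝ) < a + 1 := by linarith
  have h1a : (0:ℝ) < 1 + a := by linarith
  set γ : ℝ := a / (a + 1) with hγdef
  set α : ℝ := -3 + a ^ 2 / (a + 1) with hαdef
  have hγ0 : 0 < γ := by rw [hγdef]; positivity
  have hαeq : (a - 2) - (1 + γ) = α := by
    rw [hγdef, hαdef]; field_simp; ring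
  -- positivity of c
  have hcpos : ∀ l : ℕ, 1 ≤ l → 0 < c l := by
    intro l hl
    induction l, hl using Nat.le_induction with
    | base =>
      have hb : ∀ y : ℝ, 0 < y → 0 < betaF a y := fun y hy =>
        div_pos (mul_pos (Real.Gamma_pos_of_pos ha) (Real.Gamma_pos_of_pos hy))
          (Real.Gamma_pos_of_pos (by linarith))
      rw [h1]
      exact mul_pos (div_pos (hb _ (by linarith)) (hb _ (by linarith)))
        (div_pos ha (by linarith))
    | succ n hn ih =>
      have h := hrec (n+1) (by omega)
      simp only [Nat.add_sub_cancel] at h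
      push_cast at h
      rw [h]
      have hn1 : (1:ℝ) ≤ (n:ℝ) := by exact_mod_cast hn
      refine mul_pos ih (div_pos (by linarith) (mul_pos ha1 (by linarith)))
  set C : ℝ := 2*(a-2)^2 + 2*(1+γ)^2 + 2*|α| with hCdef
  have hC0 : 0 ≤ C := by rw [hCdef]; positivity
  set D : ℝ := 2*|a-2| + 2*(1+γ) with hDdef
  set L₀ : ℕ := max 2 ⌈D⌉₊ with hL₀def
  have hL1 : 1 ≤ L₀ := le_trans (by norm_num) (le_max_left 2 ⌈D⌉₊)
  have hL2 : 2 ≤ L₀ := le_max_left 2 ⌈D⌉₊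
  have hLD : D ≤ (L₀:ℝ) :=
    le_trans (Nat.le_ceil D) (by exact_mod_cast le_max_right 2 ⌈D⌉₊)
  have hLpos : (0:ℝ) < (L₀:ℝ) := by
    have : (1:ℝ) ≤ (L₀:ℝ) := by exact_mod_cast hL1
    linarith
  have hrL0 : 0 < (fun k : ℕ => c k * (1+a)^(k:ℝ) / (k:ℝ)^α) L₀ := by
    simp only []
    exact div_pos (mul_pos (hcpos _ hL1) (Real.rpow_pos_of_pos h1a _))
      (Real.rpow_pos_of_pos hLpos _)
  -- the key step estimate
  have hstep : ∀ l : ℕ, L₀ ≤ l → ∃ S : ℝ,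
      (fun k : ℕ => c k * (1+a)^(k:ℝ) / (k:ℝ)^α) (l+1)
        = (fun k : ℕ => c k * (1+a)^(k:ℝ) / (k:ℝ)^α) l * Real.exp S ∧
      -(C / ((l:ℝ)*((l:ℝ)+1))) ≤ S ∧ S ≤ C / ((l:ℝ)*((l:ℝ)+1)) := by
    intro l hl
    simp only []
    have hl2 : (2:ℝ) ≤ (l:ℝ) := by exact_mod_cast le_trans hL2 hl
    have hl0 : (0:ℝ) < (l:ℝ) := by linarith
    have hlD : D ≤ (l:ℝ) := le_trans hLD (by exact_mod_cast hl)
    have hm0 : (0:ℝ) < (l:ℝ) + 1 := by linarith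
    have hm2 : (2:ℝ) ≤ (l:ℝ) + 1 := by linarith
    have hmD : D ≤ (l:ℝ) + 1 := by linarith
    have habs2 : (0:ℝ) ≤ 2*|a-2| := by positivity
    have hgpos : (0:ℝ) < 1 + γ := by linarith
    -- the three small quantities
    set x₁ : ℝ := (a-2)/((l:ℝ)+1) with hx₁def
    set x₂ : ℝ := (1+γ)/((l:ℝ)+1) with hx₂def
    set x₃ : ℝ := -(1/((l:ℝ)+1)) with hx₃def
    have hx1 : |x₁| ≤ 1/2 := by
      rw [hx₁def, abs_div, abs_of_pos hm0, div_le_iff₀ hm0]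
      rw [hDdef] at hmD
      linarith
    have hx2 : |x₂| ≤ 1/2 := by
      rw [hx₂def, abs_div, abs_of_pos hm0, abs_of_pos hgpos, div_le_iff₀ hm0]
      rw [hDdef] at hmD
      linarith
    have hx3 : |x₃| ≤ 1/2 := by
      rw [hx₃def, abs_neg, abs_div, abs_of_pos hm0, abs_one, div_le_iff₀ hm0]
      linarith
    have p1 : (0:ℝ) < 1 + x₁ := by
      have := (abs_le.1 hx1).1; linarith
    have p2 : (0:ℝ) < 1 + x₂ := by
      have := (abs_le.1 hx2).1; linarith
    have p3 : (0:ℝ) < 1 + x₃ := by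
      rw [hx₃def]
      have : 1/((l:ℝ)+1) < 1 := by rw [div_lt_one hm0]; linarith
      linarith
    have e1 := log_one_add_bound hx1
    have e2 := log_one_add_bound hx2
    have e3 := log_one_add_bound hx3
    refine ⟨Real.log (1+x₁) - Real.log (1+x₂) + α * Real.log (1+x₃), ?_, ?_⟩
    · -- the exact recurrence identity
      have hrecl := hrec (l+1) (by omega)
      simp only [Nat.add_sub_cancel] at hrecl
      push_cast at hrecl
      push_cast
      rw [hrecl]
      have hexpS : Real.exp (Real.log (1+x₁) - Real.log (1+x₂) + α * Real.log (1+x₃))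
          = (1+x₁)/(1+x₂) * ((l:ℝ)^α/((l:ℝ)+1)^α) := by
        rw [Real.exp_add, Real.exp_sub, Real.exp_log p1, Real.exp_log p2]
        congr 1
        rw [mul_comm α (Real.log (1+x₃)), ← Real.rpow_def_of_pos p3]
        rw [show (1:ℝ) + x₃ = (l:ℝ)/((l:ℝ)+1) by rw [hx₃def]; field_simp; ring]
        rw [Real.div_rpow hl0.le hm0.le]
      rw [hexpS]
      have hpow : (1+a)^((l:ℝ)+1) = (1+a)^(l:ℝ) * (1+a) :=
        Real.rpow_add_one (ne_of_gt h1a) _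
      rw [hpow, hx₁def, hx₂def]
      have hA : ((l:ℝ))^α ≠ 0 := ne_of_gt (Real.rpow_pos_of_pos hl0 _)
      have hB : ((l:ℝ)+1)^α ≠ 0 := ne_of_gt (Real.rpow_pos_of_pos hm0 _)
      have hden : ((l:ℝ)+1+1+γ) ≠ 0 := by positivity
      have h2 : (1:ℝ) + (1+γ)/((l:ℝ)+1) ≠ 0 := by positivity
      field_simp
      ring
    · -- the estimate
      have hlin : x₁ - x₂ + α * x₃ = 0 := by
        rw [← hαeq, hx₁def, hx₂def, hx₃def]
        field_simp
        ring
      have hSsum : Real.log (1+x₁) - Real.log (1+x₂) + α * Real.log (1+x₃)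
          = (Real.log (1+x₁) - x₁) - (Real.log (1+x₂) - x₂)
            + α * (Real.log (1+x₃) - x₃) := by
        linear_combination hlin
      have htri : |Real.log (1+x₁) - Real.log (1+x₂) + α * Real.log (1+x₃)|
          ≤ 2*x₁^2 + 2*x₂^2 + |α| * (2*x₃^2) := by
        rw [hSsum]
        calc |(Real.log (1+x₁) - x₁) - (Real.log (1+x₂) - x₂)
              + α * (Real.log (1+x₃) - x₃)|
            ≤ |(Real.log (1+x₁) - x₁) - (Real.log (1+x₂) - x₂)|
              + |α * (Real.log (1+x₃) - x₃)| := abs_add_le _ _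
          _ ≤ (|Real.log (1+x₁) - x₁| + |Real.log (1+x₂) - x₂|)
              + |α| * |Real.log (1+x₃) - x₃| := by
              rw [abs_mul]
              exact add_le_add_left (abs_sub _ _) _
          _ ≤ 2*x₁^2 + 2*x₂^2 + |α| * (2*x₃^2) :=
              add_le_add (add_le_add e1 e2)
                (mul_le_mul_of_nonneg_left e3 (abs_nonneg α))
      have hCsum : 2*x₁^2 + 2*x₂^2 + |α| * (2*x₃^2) = C/((l:ℝ)+1)^2 := by
        rw [hx₁def, hx₂def, hx₃def, hCdef]
        field_simp
      have hfin : C/((l:ℝ)+1)^2 ≤ C / ((l:ℝ)*((l:ℝ)+1)) := by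
        apply div_le_div_of_nonneg_left hC0 (by positivity)  -- check name
        nlinarith
      have := htri.trans (le_of_eq hCsum) |>.trans hfin
      exact abs_le.1 this
  have hsand := sandwich (fun k : ℕ => c k * (1+a)^(k:ℝ) / (k:ℝ)^α) C L₀ hL1 hrL0 hstep
  simp only [] at hsand hrL0
  refine ⟨(c L₀ * (1+a)^(L₀:ℝ) / (L₀:ℝ)^α) * Real.exp (-(C/(L₀:ℝ))),
    mul_pos hrL0 (Real.exp_pos _),
    (c L₀ * (1+a)^(L₀:ℝ) / (L₀:ℝ)^α) * Real.exp (C/(L₀:ℝ)),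
    mul_pos hrL0 (Real.exp_pos _), L₀, ?_⟩
  intro l hl
  obtain ⟨hs1, hs2⟩ := hsand l hl
  have hl0 : (0:ℝ) < (l:ℝ) := by
    have : (1:ℝ) ≤ (l:ℝ) := by exact_mod_cast le_trans hL1 hl
    linarith
  have hAl : (0:ℝ) < (l:ℝ)^α := Real.rpow_pos_of_pos hl0 _
  have hPl : (0:ℝ) < (1+a)^(l:ℝ) := Real.rpow_pos_of_pos h1a _
  have hinvl : (0:ℝ) < 1/(l:ℝ) := by positivity
  have hdiv : C/(L₀:ℝ) = C * (1/(L₀:ℝ)) := by ring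
  have hmono1 : (c L₀ * (1+a)^(L₀:ℝ) / (L₀:ℝ)^α) * Real.exp (-(C/(L₀:ℝ)))
      ≤ (c L₀ * (1+a)^(L₀:ℝ) / (L₀:ℝ)^α) * Real.exp (-(C * (1/(L₀:ℝ) - 1/(l:ℝ)))) := by
    apply mul_le_mul_of_nonneg_left _ hrL0.le
    apply Real.exp_le_exp.2
    rw [hdiv]
    nlinarith [mul_nonneg hC0 hinvl.le]
  have hmono2 : (c L₀ * (1+a)^(L₀:ℝ) / (L₀:ℝ)^α) * Real.exp (C * (1/(L₀:ℝ) - 1/(l:ℝ)))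
      ≤ (c L₀ * (1+a)^(L₀:ℝ) / (L₀:ℝ)^α) * Real.exp (C/(L₀:ℝ)) := by
    apply mul_le_mul_of_nonneg_left _ hrL0.le
    apply Real.exp_le_exp.2
    rw [hdiv]
    nlinarith [mul_nonneg hC0 hinvl.le]
  have hb1 := hmono1.trans hs1
  have hb2 := hs2.trans hmono2
  constructor
  · rw [div_le_iff₀ hPl]
    rw [le_div_iff₀ hAl] at hb1
    linarith
  · rw [le_div_iff₀ hPl]
    rw [div_le_iff₀ hAl] at hb2
    linarith
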